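/- Let k ≥ 3 and n ≥ 2 be integers, let α be a positive real number such that (k − 1)^α > e·(2α + 1), and let r be a positive integer with r > α·n. Then the number of points x = (x_1, …, x_n) ∈ ℤ^n with |x_1| + ⋯ + |x_n| ≤ r is strictly less than (k·(k − 1)^r − 2)/(k − 2). -/

import Mathlib

open Finset

/-- The finset of tuples of naturals with sum at most `m`. -/
private def ballB (n m : ℕ) : Finset (Fin n → ℕ) :=
  (Fintype.piFinset fun _ => Finset.range (m + 1)).filter fun y => ∑ i, y i ≤ m

private lemma mem_ballB {n m : ℕ} {y : Fin n → ℕ} : y ∈ ballB n m ↔ ∑ i, y i ≤ m := by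
  simp only [ballB, Finset.mem_filter, Fintype.mem_piFinset, Finset.mem_range, Nat.lt_succ_iff]
  refine ⟨fun h => h.2, fun h => ⟨fun i => le_trans ?_ h, h⟩⟩
  exact Finset.single_le_sum (fun j _ => Nat.zero_le _) (Finset.mem_univ i)

private lemma card_ballB_le : ∀ n m : ℕ, (ballB n m).card ≤ (n + m).choose n
  | 0, m => by
    apply le_trans (Finset.card_le_card (Finset.subset_univ _))
    simp
  | n + 1, m => by
    have key : (ballB (n + 1) m).card ≤
        ((Finset.range (m + 1)).sigma fun a => ballB n (m - a)).card := by
      apply Finset.card_le_card_of_injOn (fun y => ⟨y 0, Fin.tail y⟩)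
      · intro y hy
        rw [Finset.mem_coe, mem_ballB] at hy
        rw [Fin.sum_univ_succ] at hy
        refine Finset.mem_sigma.2 ⟨?_, ?_⟩
        · show y 0 ∈ Finset.range (m + 1)
          exact Finset.mem_range.2 (by omega)
        show Fin.tail y ∈ ballB n (m - y 0)
        rw [mem_ballB]
        have htail : ∑ i, Fin.tail y i = ∑ i : Fin n, y i.succ := rfl
        omega
      · intro y _ z _ h
        simp only [Sigma.mk.inj_iff, heq_eq_eq] at h
        funext i
        refine Fin.cases ?_ ?_ i
        · exact h.1
        · intro j; exact congrFun h.2 j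
    rw [Finset.card_sigma] at key
    refine key.trans ?_
    calc ∑ a ∈ Finset.range (m + 1), (ballB n (m - a)).card
        ≤ ∑ a ∈ Finset.range (m + 1), (n + (m - a)).choose n := by
          exact Finset.sum_le_sum fun a _ => card_ballB_le n (m - a)
      _ = ∑ a ∈ Finset.range (m + 1), ((m - a) + n).choose n := by
          simp [Nat.add_comm]
      _ = ∑ a ∈ Finset.range (m + 1), (a + n).choose n := by
          exact Finset.sum_range_reflect (fun a => (a + n).choose n) (m + 1)
      _ = (m + n + 1).choose (n + 1) := Nat.sum_range_add_choose m n
      _ = (n + 1 + m).choose (n + 1) := by ring_nf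

/-- `(n : ℝ)^n ≤ n! * e^n`. -/
private lemma pow_le_factorial_mul_exp : ∀ n : ℕ, (n : ℝ) ^ n ≤ (n.factorial : ℝ) * Real.exp 1 ^ n
  | 0 => by simp
  | n + 1 => by
    have ih := pow_le_factorial_mul_exp n
    have hexp1 : (1:ℝ) ≤ Real.exp 1 := by
      have := Real.add_one_le_exp (1:ℝ); linarith
    rcases Nat.eq_zero_or_pos n with h | h
    · subst h
      norm_num [Nat.factorial]
      try linarith
    have hn : (0:ℝ) < n := by exact_mod_cast h
    have h1 : ((n:ℝ) + 1) ^ n ≤ (n : ℝ) ^ n * Real.exp 1 := by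
      have h2 : (n:ℝ) + 1 ≤ (n:ℝ) * Real.exp (1 / n) := by
        have h3 := Real.add_one_le_exp (1 / (n:ℝ))
        have h4 : (n:ℝ) * (1/(n:ℝ)) = 1 := by field_simp
        nlinarith
      calc ((n:ℝ) + 1) ^ n ≤ ((n:ℝ) * Real.exp (1/n)) ^ n := by
            apply pow_le_pow_left₀ (by positivity) h2
        _ = (n:ℝ) ^ n * Real.exp (1/n) ^ n := mul_pow _ _ _
        _ = (n:ℝ) ^ n * Real.exp 1 := by
            rw [← Real.exp_nat_mul]
            congr 1
            field_simp
    have hexp : (0:ℝ) < Real.exp 1 := Real.exp_pos 1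
    have hcast : (((n:ℕ) + 1 : ℕ) : ℝ) = (n:ℝ) + 1 := by push_cast; ring
    rw [hcast]
    calc ((n:ℝ) + 1) ^ (n + 1) = ((n:ℝ) + 1) * ((n:ℝ)+1) ^ n := by ring
      _ ≤ ((n:ℝ) + 1) * ((n:ℝ) ^ n * Real.exp 1) := by nlinarith
      _ ≤ ((n:ℝ) + 1) * (((n.factorial : ℝ) * Real.exp 1 ^ n) * Real.exp 1) :=
          mul_le_mul_of_nonneg_left (mul_le_mul_of_nonneg_right ih hexp.le) (by positivity)
      _ = ((n+1).factorial : ℝ) * Real.exp 1 ^ (n + 1) := by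
          rw [Nat.factorial_succ]; push_cast; ring

set_option maxHeartbeats 1000000 in
theorem tree_ball_gt_grid_ball (k n r : ℕ) (hk : 3 ≤ k) (hn : 2 ≤ n) (α : ℝ) (hα : 0 < α)
    (hαk : ((k : ℝ) - 1) ^ α > Real.exp 1 * (2 * α + 1))
    (hr : 0 < r) (hrα : α * n < (r : ℝ)) :
    ({x : Fin n → ℤ | ∑ i, |x i| ≤ (r : ℤ)}.ncard : ℝ)
      < ((k : ℝ) * ((k : ℝ) - 1) ^ r - 2) / ((k : ℝ) - 2) := by
  -- Step 1: counting.  Inject the grid ball into `ballB n (2*r)`.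
  set S := {x : Fin n → ℤ | ∑ i, |x i| ≤ (r : ℤ)} with hS
  have hcount : S.ncard ≤ (n + 2 * r).choose n := by
    have h1 : S.ncard ≤ ((ballB n (2 * r) : Finset (Fin n → ℕ)) : Set (Fin n → ℕ)).ncard := by
      apply Set.ncard_le_ncard_of_injOn
        (fun x i => (if 0 ≤ x i then 2 * x i else -2 * x i - 1).toNat)
      · intro x hx
        simp only [Finset.coe_sort_coe, Finset.mem_coe]
        rw [mem_ballB]
        have hle : ∀ i, ((if 0 ≤ x i then 2 * x i else -2 * x i - 1).toNat : ℤ) ≤ 2 * |x i| := by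
          intro i
          rcases abs_cases (x i) with ⟨h1, h2⟩ | ⟨h1, h2⟩ <;> split_ifs <;> omega
        have : ((∑ i, (if 0 ≤ x i then 2 * x i else -2 * x i - 1).toNat : ℕ) : ℤ)
            ≤ 2 * (r : ℤ) := by
          push_cast
          calc (∑ i, ((if 0 ≤ x i then 2 * x i else -2 * x i - 1).toNat : ℤ))
              ≤ ∑ i, 2 * |x i| := Finset.sum_le_sum fun i _ => hle i
            _ = 2 * ∑ i, |x i| := by rw [Finset.mul_sum]
            _ ≤ 2 * (r : ℤ) := by
                have hx' : ∑ i, |x i| ≤ (r : ℤ) := hx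
                linarith
        exact_mod_cast this
      · intro x _ z _ h
        funext i
        have := congrFun h i
        simp only at this
        split_ifs at this <;> omega
    rw [Set.ncard_coe_finset] at h1
    exact h1.trans (card_ballB_le n (2 * r))
  -- Notation
  set K : ℝ := (k : ℝ) - 1 with hK
  have hK2 : (2:ℝ) ≤ K := by
    have : (3:ℝ) ≤ (k:ℝ) := by exact_mod_cast hk
    simp only [hK]; linarith
  have hKpos : (0:ℝ) < K := by linarith
  have hn0 : (0:ℝ) < n := by exact_mod_cast (by omega : 0 < n)
  have hr0 : (0:ℝ) < r := by exact_mod_cast hr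
  have hL : (0:ℝ) < Real.log K := Real.log_pos (by linarith)
  -- hypothesis in log form
  have hlog : 1 + Real.log (2 * α + 1) < α * Real.log K := by
    have h1 : Real.log (Real.exp 1 * (2 * α + 1)) < Real.log (K ^ α) :=
      Real.log_lt_log (by positivity) hαk
    rw [Real.log_rpow hKpos, Real.log_mul (Real.exp_ne_zero 1) (by positivity),
      Real.log_exp] at h1
    exact h1
  -- Step 2: choose bound: (n+2r).choose n ≤ (e * (n + 2r) / n)^n
  have hchoose : ((n + 2 * r).choose n : ℝ) ≤ (Real.exp 1 * (n + 2 * r) / n) ^ n := by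
    have hd : ((n + 2 * r).choose n : ℝ) * (n.factorial : ℝ) ≤ ((n : ℝ) + 2 * r) ^ n := by
      have h1 : (n + 2 * r).choose n * n.factorial ≤ (n + 2 * r) ^ n := by
        rw [mul_comm, ← Nat.descFactorial_eq_factorial_mul_choose]
        exact Nat.descFactorial_le_pow _ _
      exact_mod_cast h1
    have h2 := pow_le_factorial_mul_exp n
    have hfac : (0:ℝ) < (n.factorial : ℝ) := by exact_mod_cast n.factorial_pos
    rw [div_pow, mul_pow]
    rw [le_div_iff₀ (by positivity)]
    calc ((n + 2 * r).choose n : ℝ) * (n:ℝ)^n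
        ≤ ((n + 2 * r).choose n : ℝ) * ((n.factorial : ℝ) * Real.exp 1 ^ n) := by
          have : (0:ℝ) ≤ ((n + 2 * r).choose n : ℝ) := by positivity
          nlinarith
      _ = (((n + 2 * r).choose n : ℝ) * (n.factorial : ℝ)) * Real.exp 1 ^ n := by ring
      _ ≤ ((n : ℝ) + 2 * r) ^ n * Real.exp 1 ^ n := by
          have : (0:ℝ) < Real.exp 1 ^ n := by positivity
          nlinarith
      _ = Real.exp 1 ^ n * ((n:ℝ) + 2 * r) ^ n := by ring
  -- Step 3: (e*(n+2r)/n)^n ≤ K^r  via logarithms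
  have hmain : (Real.exp 1 * (n + 2 * r) / n) ^ n ≤ K ^ r := by
    have hq : (0:ℝ) < Real.exp 1 * (n + 2 * r) / n := by positivity
    rw [← Real.exp_log (pow_pos hq n), ← Real.exp_log (pow_pos hKpos r)]
    apply Real.exp_le_exp.2
    rw [Real.log_pow, Real.log_pow]
    -- reduce to: n * (1 + log((n+2r)/n)) ≤ r * log K
    set s : ℝ := r / (α * n) with hs
    have hs1 : 1 < s := by
      rw [hs, lt_div_iff₀ (by positivity)]
      linarith
    have hsr : (n:ℝ) * s * α = r := by
      rw [hs]; field_simp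
    have hlog2 : Real.log (Real.exp 1 * (n + 2 * r) / n)
        = 1 + Real.log ((n + 2 * r) / n) := by
      rw [mul_div_assoc, Real.log_mul (Real.exp_ne_zero 1) (by positivity), Real.log_exp]
    have hineq1 : ((n:ℝ) + 2 * r) / n ≤ s * (2 * α + 1) := by
      have h1 : ((n:ℝ) + 2 * r) / n = 1 + 2 * (s * α) := by
        have : (s * α) * n = r := by rw [← hsr]; ring
        field_simp
        nlinarith [this]
      rw [h1]
      nlinarith
    have hlog3 : Real.log (((n:ℝ) + 2 * r) / n) ≤ Real.log s + Real.log (2 * α + 1) := by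
      rw [← Real.log_mul (by linarith) (by linarith)]
      apply Real.log_le_log (by positivity) hineq1
    have hlogs : Real.log s ≤ s - 1 := Real.log_le_sub_one_of_pos (by linarith)
    have hlogα : 0 ≤ Real.log (2 * α + 1) := Real.log_nonneg (by linarith)
    calc (n:ℝ) * Real.log (Real.exp 1 * (n + 2 * r) / n)
        = (n:ℝ) * (1 + Real.log ((n + 2 * r) / n)) := by rw [hlog2]
      _ ≤ (n:ℝ) * (1 + (Real.log s + Real.log (2 * α + 1))) :=
          mul_le_mul_of_nonneg_left (by linarith [hlog3]) hn0.le
      _ ≤ (n:ℝ) * (s + s * Real.log (2 * α + 1)) :=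
          mul_le_mul_of_nonneg_left
            (by nlinarith [mul_nonneg (by linarith : (0:ℝ) ≤ s - 1) hlogα]) hn0.le
      _ = (n:ℝ) * s * (1 + Real.log (2 * α + 1)) := by ring
      _ ≤ (n:ℝ) * s * (α * Real.log K) :=
          mul_le_mul_of_nonneg_left hlog.le (mul_nonneg hn0.le (by linarith))
      _ = (r:ℝ) * Real.log K := by rw [← hsr]; ring
  -- Step 4: K^r < RHS
  have hfinal : K ^ r < ((k : ℝ) * K ^ r - 2) / ((k : ℝ) - 2) := by
    rw [lt_div_iff₀ (by linarith : (0:ℝ) < (k:ℝ) - 2)]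
    have hKr : (1:ℝ) < K ^ r := one_lt_pow₀ (by linarith) (by omega)
    have : (k:ℝ) = K + 1 := by rw [hK]; ring
    nlinarith
  have h0 : ((S.ncard : ℕ) : ℝ) ≤ ((n + 2 * r).choose n : ℝ) := by exact_mod_cast hcount
  calc (S.ncard : ℝ) ≤ ((n + 2 * r).choose n : ℝ) := h0
    _ ≤ (Real.exp 1 * (n + 2 * r) / n) ^ n := hchoose
    _ ≤ K ^ r := hmain
    _ < ((k : ℝ) * K ^ r - 2) / ((k : ℝ) - 2) := hfinal
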